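/- arXiv:1612.06628 — 7 statements merged into one kernel-verified Lean document; each statement's English description precedes it below -/
import Mathlib

section
/- A reduced commutative ring is Armendariz: if f(x) = a_0 + a_1 x + ... + a_n x^n and g(x) = b_0 + b_1 x + ... + b_m x^m are polynomials over a reduced commutative ring B with f(x)g(x) = 0, then a_i b_j = 0 for all i and j. -/
open Polynomial

/-- A reduced commutative ring is Armendariz: if `f * g = 0` in `B[x]`, then all products
of coefficients `a_i * b_j` vanish. -/
theorem stmt5 {B : Type*} [CommRing B] (hred : ∀ b : B, b * b = 0 → b = 0)
    (f g : Polynomial B) (h : f * g = 0) (i j : ℕ) :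
    f.coeff i * g.coeff j = 0 := by
  have hR : IsReduced B := by
    rw [isReduced_iff_pow_one_lt 2 one_lt_two]
    intro x hx
    exact hred x (by rw [← sq]; exact hx)
  have hnil : IsNilpotent (f.coeff i * g.coeff j) := by
    rw [← mem_nilradical, nilradical_eq_sInf, Submodule.mem_sInf]
    intro p hp
    simp only [Set.mem_setOf_eq] at hp
    haveI := hp
    have hmap : (f.map (Ideal.Quotient.mk p)) * (g.map (Ideal.Quotient.mk p)) = 0 := by
      rw [← Polynomial.map_mul, h, Polynomial.map_zero]
    rcases mul_eq_zero.mp hmap with hf | hg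
    · have : Ideal.Quotient.mk p (f.coeff i) = 0 := by
        rw [← Polynomial.coeff_map, hf, Polynomial.coeff_zero]
      have hmem : f.coeff i ∈ p := Ideal.Quotient.eq_zero_iff_mem.mp this
      exact Ideal.mul_mem_right _ _ hmem
    · have : Ideal.Quotient.mk p (g.coeff j) = 0 := by
        rw [← Polynomial.coeff_map, hg, Polynomial.coeff_zero]
      have hmem : g.coeff j ∈ p := Ideal.Quotient.eq_zero_iff_mem.mp this
      exact Ideal.mul_mem_left _ _ hmem
  exact hnil.eq_zero
end

section
/- Every reduced ring is quasi-Armendariz: if B is a reduced ring and f(x), g(x) in B[x] satisfy f(x) B[x] g(x) = 0, then a_i B b_j = 0 for all coefficients a_i of f and b_j of g. -/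
open Polynomial Finset

section aux
variable {B : Type*} [Ring B]

private lemma red2 (hred : ∀ b : B, b * b = 0 → b = 0) {a b : B} (h : a * b = 0) :
    b * a = 0 := by
  have hab : ∀ x : B, a * (b * x) = 0 := fun x => by rw [← mul_assoc, h, zero_mul]
  exact hred _ (by simp [mul_assoc, hab])

private lemma red3 (hred : ∀ b : B, b * b = 0 → b = 0) {a b : B} (h : a * b = 0) (r : B) :
    a * r * b = 0 := by
  have h2 : b * a = 0 := red2 hred h
  have h2' : ∀ x : B, b * (a * x) = 0 := fun x => by rw [← mul_assoc, h2, zero_mul]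
  exact hred _ (by simp [mul_assoc, h2'])

private lemma red4 (hred : ∀ b : B, b * b = 0 → b = 0) {a b : B} (h : a * b * b = 0) :
    a * b = 0 := by
  have h' : ∀ x : B, a * (b * (b * x)) = 0 := fun x => by
    rw [← mul_assoc, ← mul_assoc, h, zero_mul]
  have hc : b * (a * b) = 0 := hred _ (by simp [mul_assoc, h'])
  exact hred _ (by rw [mul_assoc, hc, mul_zero])

private lemma armendariz (hred : ∀ b : B, b * b = 0 → b = 0) (f g : Polynomial B)
    (hfg : f * g = 0) : ∀ n i j : ℕ, i + j = n → f.coeff i * g.coeff j = 0 := by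
  intro n
  induction n using Nat.strong_induction_on with
  | _ n IH =>
    have extract : ∀ j ≤ n,
        (∑ k ∈ range (n + 1 - j), f.coeff (n - j - k) * g.coeff (j + k)) = 0 →
        f.coeff (n - j) * g.coeff j = 0 := by
      intro j hj hS
      have hmul : (∑ k ∈ range (n + 1 - j),
          f.coeff (n - j - k) * g.coeff (j + k) * g.coeff j) = 0 := by
        rw [← Finset.sum_mul, hS, zero_mul]
      rw [Finset.sum_eq_single 0 (fun k hk hk0 => by
            have hk' : k < n + 1 - j := Finset.mem_range.mp hk
            have hsmall : (n - j - k) + j < n := by omega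
            exact red3 hred (IH _ hsmall _ _ rfl) _)
          (fun h0 => absurd (Finset.mem_range.mpr (by omega)) h0)] at hmul
      simp only [Nat.sub_zero, Nat.add_zero] at hmul
      exact red4 hred hmul
    have key : ∀ j ≤ n,
        (∑ k ∈ range (n + 1 - j), f.coeff (n - j - k) * g.coeff (j + k)) = 0 ∧
        f.coeff (n - j) * g.coeff j = 0 := by
      intro j
      induction j with
      | zero =>
        intro _
        have hc : (f * g).coeff n = 0 := by rw [hfg, Polynomial.coeff_zero]
        rw [Polynomial.coeff_mul, Finset.Nat.sum_antidiagonal_eq_sum_range_succ_mk,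
          ← Finset.sum_range_reflect] at hc
        simp only [Nat.succ_sub_one, Nat.add_sub_cancel] at hc
        have hS : (∑ k ∈ range (n + 1 - 0), f.coeff (n - 0 - k) * g.coeff (0 + k)) = 0 := by
          rw [← hc]
          refine Finset.sum_congr (congrArg range (by omega)) (fun k hk => ?_)
          have hk' : k < n + 1 := Finset.mem_range.mp hk
          rw [show n - 0 - k = n - k from by omega,
            show n - (n - k) = 0 + k from by omega]
        exact ⟨hS, extract 0 (by omega) hS⟩
      | succ j ihj =>
        intro hj1
        obtain ⟨hSj, hterm⟩ := ihj (by omega)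
        have hsplit : n + 1 - j = (n - j) + 1 := by omega
        rw [hsplit, Finset.sum_range_succ'] at hSj
        have hS : (∑ k ∈ range (n + 1 - (j + 1)),
            f.coeff (n - (j + 1) - k) * g.coeff ((j + 1) + k)) = 0 := by
          have he : (∑ k ∈ range (n + 1 - (j + 1)),
              f.coeff (n - (j + 1) - k) * g.coeff ((j + 1) + k)) =
              ∑ k ∈ range (n - j), f.coeff (n - j - (k + 1)) * g.coeff (j + (k + 1)) := by
            refine Finset.sum_congr (congrArg range (by omega)) (fun k hk => ?_)
            rw [show n - (j + 1) - k = n - j - (k + 1) from by omega,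
              show (j + 1) + k = j + (k + 1) from by omega]
          rw [he]
          have h0 : f.coeff (n - j - 0) * g.coeff (j + 0) = 0 := by
            simpa using hterm
          rw [h0, add_zero] at hSj
          exact hSj
        exact ⟨hS, extract (j + 1) hj1 hS⟩
    intro i j hij
    have h2 := (key j (by omega)).2
    rwa [show n - j = i from by omega] at h2

end aux

/-- Every reduced ring is quasi-Armendariz: if `f(x) B[x] g(x) = 0`, then `a_i B b_j = 0`
for all coefficients `a_i` of `f` and `b_j` of `g`. -/
theorem stmt6 {B : Type*} [Ring B] (hred : ∀ b : B, b * b = 0 → b = 0)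
    (f g : Polynomial B) (h : ∀ p : Polynomial B, f * p * g = 0) (i j : ℕ) (r : B) :
    f.coeff i * r * g.coeff j = 0 := by
  have hfg : (f * C r) * g = 0 := h (C r)
  have := armendariz hred (f * C r) g hfg (i + j) i j rfl
  rwa [Polynomial.coeff_mul_C] at this
end

section
/- Let B be a ring and M a right B-module. If M is a reduced B-module, then the polynomial module M[x] is a reduced B[x]-module. Conversely, if M[x] is a reduced B[x]-module, then M is a reduced B-module. -/
open Polynomial MulOpposite

/-- The polynomial module `M[x]` over `Bᵐᵒᵖ[X]`, for a right `B`-module `M`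
(encoded as a left `Bᵐᵒᵖ`-module). -/
noncomputable def polyModAux (B : Type*) [Ring B] (M : Type*) [AddCommGroup M]
    [Module Bᵐᵒᵖ M] : Module (Polynomial Bᵐᵒᵖ) (ℕ →₀ M) :=
  Module.compHom _
    (Polynomial.eval₂RingHom' (Module.toAddMonoidEnd Bᵐᵒᵖ (ℕ →₀ M))
      (Finsupp.mapDomain.addMonoidHom Nat.succ : AddMonoid.End (ℕ →₀ M))
      (fun a => AddMonoidHom.ext fun p => (Finsupp.mapDomain_smul a p).symm))

/-- `M[x]` as a right `B[x]`-module, i.e. a left module over `(B[x])ᵐᵒᵖ`. -/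
noncomputable def polyModOp (B : Type*) [Ring B] (M : Type*) [AddCommGroup M]
    [Module Bᵐᵒᵖ M] : Module (Polynomial B)ᵐᵒᵖ (ℕ →₀ M) :=
  letI := polyModAux B M
  Module.compHom _ (Polynomial.opRingEquiv B).toRingHom

/-- The right action `m(x) · f(x)` of `B[x]` on the polynomial module `M[x]`. -/
noncomputable def rsmul (B : Type*) [Ring B] (M : Type*) [AddCommGroup M]
    [Module Bᵐᵒᵖ M] (p : ℕ →₀ M) (f : Polynomial B) : ℕ →₀ M := by
  letI := polyModOp B M
  exact op f • p

/-- A right `S`-module `N` is reduced if `na = 0` implies `nS ∩ Na = 0`. -/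
def RModReduced (S : Type*) [Ring S] (N : Type*) [AddCommGroup N] [Module Sᵐᵒᵖ N] : Prop :=
  ∀ (n : N) (a : S), op a • n = 0 →
    ∀ x : N, (∃ b : S, x = op b • n) → (∃ n' : N, x = op a • n') → x = 0

/-! ### Auxiliary computational lemmas -/

/-- The shift endomorphism of `M[x]`. -/
noncomputable def shiftE (M : Type*) [AddCommGroup M] : AddMonoid.End (ℕ →₀ M) :=
  Finsupp.mapDomain.addMonoidHom Nat.succ

lemma shift_pow_apply (M : Type*) [AddCommGroup M] (n : ℕ) (p : ℕ →₀ M) (k : ℕ) :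
    ((shiftE M) ^ n) p k = if n ≤ k then p (k - n) else 0 := by
  induction n generalizing p k with
  | zero => simp [shiftE]; rfl
  | succ n IH =>
    have h0 : ((shiftE M) ^ (n+1)) p = ((shiftE M) ^ n) (Finsupp.mapDomain Nat.succ p) := by
      rw [pow_succ]; rfl
    rw [h0, IH]
    rcases le_or_gt (n+1) k with h | h
    · rw [if_pos (by omega), if_pos h]
      have hk : k - n = Nat.succ (k - (n+1)) := by omega
      rw [hk, Finsupp.mapDomain_apply Nat.succ_injective]
    · rcases le_or_gt n k with h2 | h2
      · have hk : k - n = 0 := by omega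
        rw [if_pos h2, if_neg (by omega), hk,
          Finsupp.mapDomain_notin_range _ _ (by simp [Set.range, Nat.succ_ne_zero])]
      · rw [if_neg (by omega), if_neg (by omega)]

lemma aux_smul_apply (B : Type*) [Ring B] (M : Type*) [AddCommGroup M] [Module Bᵐᵒᵖ M]
    (q : Polynomial Bᵐᵒᵖ) (p : ℕ →₀ M) (k : ℕ) :
    (Polynomial.eval₂ (Module.toAddMonoidEnd Bᵐᵒᵖ (ℕ →₀ M)) (shiftE M) q) p k =
      ∑ ij ∈ Finset.HasAntidiagonal.antidiagonal k, q.coeff ij.2 • p ij.1 := by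
  induction q using Polynomial.induction_on' with
  | add q r hq hr =>
    rw [eval₂_add]
    have h0 : (Polynomial.eval₂ (Module.toAddMonoidEnd Bᵐᵒᵖ (ℕ →₀ M)) (shiftE M) q +
        Polynomial.eval₂ (Module.toAddMonoidEnd Bᵐᵒᵖ (ℕ →₀ M)) (shiftE M) r) p k =
        (Polynomial.eval₂ (Module.toAddMonoidEnd Bᵐᵒᵖ (ℕ →₀ M)) (shiftE M) q) p k +
        (Polynomial.eval₂ (Module.toAddMonoidEnd Bᵐᵒᵖ (ℕ →₀ M)) (shiftE M) r) p k := rfl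
    rw [h0, hq, hr, ← Finset.sum_add_distrib]
    refine Finset.sum_congr rfl fun ij _ => ?_
    rw [coeff_add, add_smul]
  | monomial n c =>
    rw [eval₂_monomial]
    have h0 : ((Module.toAddMonoidEnd Bᵐᵒᵖ (ℕ →₀ M)) c * (shiftE M) ^ n) p k =
        (c • (((shiftE M) ^ n) p)) k := rfl
    rw [h0, Finsupp.smul_apply, shift_pow_apply]
    rcases le_or_gt n k with h | h
    · rw [if_pos h, Finset.sum_eq_single_of_mem (k - n, n)]
      · rw [coeff_monomial, if_pos rfl]
      · simp only [Finset.HasAntidiagonal.mem_antidiagonal]; omega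
      · rintro ⟨i, j⟩ hmem hne
        simp only [Finset.HasAntidiagonal.mem_antidiagonal] at hmem
        rw [coeff_monomial, if_neg (by rintro rfl; exact hne (by simp; omega)), zero_smul]
    · rw [if_neg (by omega), smul_zero, Finset.sum_eq_zero]
      rintro ⟨i, j⟩ hmem
      simp only [Finset.HasAntidiagonal.mem_antidiagonal] at hmem
      rw [coeff_monomial, if_neg (by omega), zero_smul]

/-- Coefficient formula for the right action of `B[x]` on `M[x]`. -/
lemma rsmul_apply (B : Type*) [Ring B] (M : Type*) [AddCommGroup M] [Module Bᵐᵒᵖ M]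
    (f : Polynomial B) (p : ℕ →₀ M) (k : ℕ) :
    (rsmul B M p f) k =
      ∑ ij ∈ Finset.HasAntidiagonal.antidiagonal k, op (f.coeff ij.2) • p ij.1 := by
  have h0 : rsmul B M p f =
      (Polynomial.eval₂ (Module.toAddMonoidEnd Bᵐᵒᵖ (ℕ →₀ M)) (shiftE M)
        ((Polynomial.opRingEquiv B) (op f))) p := rfl
  rw [h0, aux_smul_apply]
  refine Finset.sum_congr rfl fun ij _ => ?_
  rw [Polynomial.coeff_opRingEquiv, unop_op]

/-! ### Consequences of reducedness -/

section Reduced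

variable {S : Type*} [Ring S] {N : Type*} [AddCommGroup N] [Module Sᵐᵒᵖ N]

/-- Reduced modules are "semicommutative": `na = 0` implies `nba = 0`. -/
lemma reduced_semicomm (h : RModReduced S N) {n : N} {a : S} (h0 : op a • n = 0) (b : S) :
    op a • (op b • n) = 0 := by
  have := h n a h0 (op a • (op b • n))
    ⟨b * a, by rw [op_mul, mul_smul]⟩ ⟨op b • n, rfl⟩
  exact this

/-- Reduced modules are "rigid": `na² = 0` implies `na = 0`. -/
lemma reduced_rigid (h : RModReduced S N) {n : N} {a : S}
    (h0 : op a • (op a • n) = 0) : op a • n = 0 := by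
  exact h (op a • n) a h0 (op a • n) ⟨1, by rw [op_one, one_smul]⟩ ⟨n, rfl⟩

/-- The key double-induction lemma: if all "products" `mᵢ aⱼ aₜ` over each
antidiagonal vanish, then every `mᵢ aⱼ` vanishes. -/
lemma reduced_core (h : RModReduced S N) (m : ℕ → N) (a : ℕ → S)
    (H : ∀ k t, ∑ ij ∈ Finset.HasAntidiagonal.antidiagonal k, op (a t) • (op (a ij.2) • m ij.1) = 0) :
    ∀ i j, op (a j) • m i = 0 := by
  have key : ∀ k, ∀ j, j ≤ k → op (a j) • m (k - j) = 0 := by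
    intro k
    induction k using Nat.strong_induction_on with
    | _ k IH =>
      intro j
      induction j using Nat.strong_induction_on with
      | _ t IHt =>
        intro hjk
        have hsum := H k t
        rw [Finset.sum_eq_single_of_mem (k - t, t)
          (by simp only [Finset.HasAntidiagonal.mem_antidiagonal]; omega)] at hsum
        · exact reduced_rigid h hsum
        · rintro ⟨i, j⟩ hmem hne
          simp only [Finset.HasAntidiagonal.mem_antidiagonal] at hmem
          rcases lt_trichotomy j t with hlt | heq | hgt
          · have hij : op (a j) • m i = 0 := by
              have := IHt j hlt (by omega)
              rwa [show k - j = i by omega] at this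
            rw [hij, smul_zero]
          · exfalso; apply hne; rw [heq]; rw [show i = k - t by omega]
          · have hit : op (a t) • m i = 0 := by
              have := IH (i + t) (by omega) t (by omega)
              rwa [show i + t - t = i by omega] at this
            exact reduced_semicomm h hit (a j)
  intro i j
  have := key (i + j) j (by omega)
  rwa [show i + j - j = i by omega] at this

end Reduced

/-! ### Armendariz-type lemma for reduced modules -/

section Poly

variable (B : Type*) [Ring B] (M : Type*) [AddCommGroup M] [Module Bᵐᵒᵖ M]

/-- Over a reduced module, `m(x)·f(x) = 0` implies all coefficient products vanish. -/
lemma reduced_armendariz (h : RModReduced B M) (m : ℕ →₀ M) (f : Polynomial B)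
    (hmf : rsmul B M m f = 0) :
    ∀ i j, op (f.coeff j) • m i = 0 := by
  have hcoeff : ∀ k, ∑ ij ∈ Finset.HasAntidiagonal.antidiagonal k, op (f.coeff ij.2) • m ij.1 = 0 := by
    intro k
    rw [← rsmul_apply B M f m k, hmf]
    rfl
  refine reduced_core h (fun i => m i) f.coeff (fun k t => ?_)
  calc ∑ ij ∈ Finset.HasAntidiagonal.antidiagonal k, op (f.coeff t) • (op (f.coeff ij.2) • m ij.1)
      = op (f.coeff t) • ∑ ij ∈ Finset.HasAntidiagonal.antidiagonal k, op (f.coeff ij.2) • m ij.1 := by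
        rw [Finset.smul_sum]
    _ = 0 := by rw [hcoeff k, smul_zero]

end Poly

/-- `M` is a reduced right `B`-module if and only if `M[x]` is a reduced right
`B[x]`-module. -/
theorem stmt7 (B : Type*) [Ring B] (M : Type*) [AddCommGroup M] [Module Bᵐᵒᵖ M] :
    letI := polyModOp B M
    (RModReduced B M ↔ RModReduced (Polynomial B) (ℕ →₀ M)) := by
  letI := polyModOp B M
  have hap : ∀ (f : Polynomial B) (p : ℕ →₀ M) (k : ℕ),
      (op f • p) k = ∑ ij ∈ Finset.HasAntidiagonal.antidiagonal k, op (f.coeff ij.2) • p ij.1 :=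
    fun f p k => rsmul_apply B M f p k
  constructor
  · -- M reduced ⟹ M[x] reduced
    intro h
    -- (1): semicommutativity in M[x]
    have semic : ∀ (m : ℕ →₀ M) (f g : Polynomial B), op f • m = 0 →
        op f • (op g • m) = 0 := by
      intro m f g hmf
      have harm := reduced_armendariz B M h m f hmf
      ext k
      rw [hap]
      refine Finset.sum_eq_zero fun ij _ => ?_
      rw [hap]
      rw [Finset.smul_sum]
      refine Finset.sum_eq_zero fun pq _ => ?_
      exact reduced_semicomm h (harm pq.1 ij.2) (g.coeff pq.2)
    -- (2): rigidity in M[x]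
    have rigid : ∀ (m : ℕ →₀ M) (f : Polynomial B),
        op f • (op f • m) = 0 → op f • m = 0 := by
      intro m f hff
      have harm := reduced_armendariz B M h (op f • m) f hff
      -- harm : ∀ i j, op (f.coeff j) • (op f • m) i = 0
      have H : ∀ k t, ∑ ij ∈ Finset.HasAntidiagonal.antidiagonal k,
          op (f.coeff t) • (op (f.coeff ij.2) • m ij.1) = 0 := by
        intro k t
        have := harm k t
        rw [hap] at this
        rwa [Finset.smul_sum] at this
      have hall := reduced_core h (fun i => m i) f.coeff H
      ext k
      rw [hap]
      exact Finset.sum_eq_zero fun ij _ => hall ij.1 ij.2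
    -- combine
    intro n f hnf x hx1 hx2
    obtain ⟨g, rfl⟩ := hx1
    obtain ⟨n', hn'⟩ := hx2
    have h1 : op f • (op g • n) = 0 := semic n f g hnf
    rw [hn'] at h1 ⊢
    exact rigid n' f h1
  · -- M[x] reduced ⟹ M reduced
    intro h m a hma x hx1 hx2
    obtain ⟨b, rfl⟩ := hx1
    obtain ⟨m', hm'⟩ := hx2
    -- constant polynomial action
    have hconst : ∀ (c : B) (p : ℕ →₀ M), op (C c : Polynomial B) • p =
        Finsupp.mapRange (fun y => op c • y) (by simp) p := by
      intro c p
      ext k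
      rw [hap, Finsupp.mapRange_apply, Finset.sum_eq_single_of_mem (k, 0)
        (by simp only [Finset.HasAntidiagonal.mem_antidiagonal]; omega)]
      · rw [coeff_C, if_pos rfl]
      · rintro ⟨i, j⟩ hmem hne
        simp only [Finset.HasAntidiagonal.mem_antidiagonal] at hmem
        rw [coeff_C, if_neg (by rintro rfl; exact hne (by simp; omega)), op_zero, zero_smul]
    have hsingle : ∀ (c : B) (y : M),
        op (C c : Polynomial B) • (Finsupp.single 0 y : ℕ →₀ M) =
          Finsupp.single 0 (op c • y) := by
      intro c y
      rw [hconst, Finsupp.mapRange_single]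
    have h0 : op (C a : Polynomial B) • (Finsupp.single 0 m : ℕ →₀ M) = 0 := by
      rw [hsingle, hma, Finsupp.single_zero]
    have := h (Finsupp.single 0 m) (C a) h0 (Finsupp.single 0 (op b • m))
      ⟨C b, by rw [hsingle]⟩
      ⟨Finsupp.single 0 m', by rw [hsingle, ← hm']⟩
    have happ := congrArg (fun p : ℕ →₀ M => p 0) this
    simpa using happ
end

section
/- Let M be a right B-module that is Armendariz. Then the map C ↦ C·B[x] from the set of annihilators of subsets of M to the set of annihilators of subsets of the polynomial module M[x] (as right ideals of B[x]) is bijective. -/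
open Polynomial MulOpposite

/-- The annihilator in `S` of a subset `X` of a right `S`-module `N`:
`ann_S(X) = {r : S | Xr = 0}`. -/
def rAnn (S : Type*) [Ring S] {N : Type*} [AddCommGroup N] [Module Sᵐᵒᵖ N]
    (X : Set N) : Set S :=
  {r : S | ∀ x ∈ X, op r • x = 0}

/-- `C` is the right ideal `eS` generated by an idempotent `e` of `S`. -/
def IsIdempotentGenerated (S : Type*) [Ring S] (C : Set S) : Prop :=
  ∃ e : S, e * e = e ∧ C = {x : S | ∃ b : S, x = e * b}

/-- A right `B`-module `M` is Armendariz if `m(x) f(x) = 0` implies `m_i b_j = 0` for all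
coefficients `m_i` of `m(x)` and `b_j` of `f(x)`. -/
def RArmendariz (B : Type*) [Ring B] (M : Type*) [AddCommGroup M] [Module Bᵐᵒᵖ M] : Prop :=
  ∀ (p : ℕ →₀ M) (f : Polynomial B), rsmul B M p f = 0 →
    ∀ i j : ℕ, op (f.coeff j) • p i = 0

/-- The right ideal `C · B[x]` of `B[x]` generated by a subset `C` of `B`. -/
def extSet (B : Type*) [Ring B] (C : Set B) : Set (Polynomial B) :=
  (AddSubgroup.closure
    {g : Polynomial B | ∃ c ∈ C, ∃ f : Polynomial B, g = Polynomial.C c * f} : Set _)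
section Aux

noncomputable def evE (B : Type*) [Ring B] (M : Type*) [AddCommGroup M] [Module Bᵐᵒᵖ M] :
    Polynomial Bᵐᵒᵖ →+* AddMonoid.End (ℕ →₀ M) :=
  Polynomial.eval₂RingHom' (Module.toAddMonoidEnd Bᵐᵒᵖ (ℕ →₀ M))
      (Finsupp.mapDomain.addMonoidHom Nat.succ : AddMonoid.End (ℕ →₀ M))
      (fun a => AddMonoidHom.ext fun p => (Finsupp.mapDomain_smul a p).symm)

variable {B : Type*} [Ring B] {M : Type*} [AddCommGroup M] [Module Bᵐᵒᵖ M]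

lemma rsmul_def (p : ℕ →₀ M) (f : Polynomial B) :
    rsmul B M p f = evE B M ((Polynomial.opRingEquiv B) (op f)) p := rfl

lemma rsmul_op (p : ℕ →₀ M) (f : Polynomial B) :
    (letI := polyModOp B M; op f • p) = rsmul B M p f := rfl

lemma rsmul_C (p : ℕ →₀ M) (c : B) : rsmul B M p (Polynomial.C c) = op c • p := by
  rw [rsmul_def]
  simp [evE]
  change (Polynomial.eval₂ (Module.toAddMonoidEnd Bᵐᵒᵖ (ℕ →₀ M))
    (Finsupp.mapDomain.addMonoidHom Nat.succ : AddMonoid.End (ℕ →₀ M)) (C (op c))) p = _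
  exact congrArg (fun g : AddMonoid.End (ℕ →₀ M) => g p) (Polynomial.eval₂_C _ _)

lemma rsmul_zero_left (f : Polynomial B) : rsmul B M 0 f = 0 := by
  rw [rsmul_def]; exact map_zero _

lemma rsmul_C_mul (p : ℕ →₀ M) (c : B) (f : Polynomial B) :
    rsmul B M p (Polynomial.C c * f) = rsmul B M (op c • p) f := by
  rw [rsmul_def, ← rsmul_C p c, rsmul_def, rsmul_def,
    show op (Polynomial.C c * f) = op f * op (Polynomial.C c) from rfl, map_mul, map_mul]
  rfl

section GenAnn
variable {S : Type*} [Ring S] {N : Type*} [AddCommGroup N] [Module Sᵐᵒᵖ N]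

lemma rAnn_zero (X : Set N) : (0 : S) ∈ rAnn S X := fun x _ => by
  rw [show op (0 : S) = 0 from rfl, zero_smul]

lemma rAnn_add {X : Set N} {a b : S} (ha : a ∈ rAnn S X) (hb : b ∈ rAnn S X) :
    a + b ∈ rAnn S X := fun x hx => by
  rw [show op (a + b) = op a + op b from rfl, add_smul, ha x hx, hb x hx, add_zero]

lemma rAnn_neg {X : Set N} {a : S} (ha : a ∈ rAnn S X) : -a ∈ rAnn S X := fun x hx => by
  rw [show op (-a) = -op a from rfl, neg_smul, ha x hx, neg_zero]

lemma rAnn_mul {X : Set N} {a : S} (ha : a ∈ rAnn S X) (b : S) : a * b ∈ rAnn S X :=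
  fun x hx => by
  rw [show op (a * b) = op b * op a from rfl, mul_smul, ha x hx, smul_zero]

end GenAnn

/-- Polynomials all of whose coefficients annihilate `U`, as an additive subgroup. -/
def coeffAnn (U : Set M) : AddSubgroup (Polynomial B) where
  carrier := {f | ∀ j, f.coeff j ∈ rAnn B U}
  zero_mem' := fun j => by rw [Polynomial.coeff_zero]; exact rAnn_zero U
  add_mem' := fun hf hg j => by rw [Polynomial.coeff_add]; exact rAnn_add (hf j) (hg j)
  neg_mem' := fun hf j => by rw [Polynomial.coeff_neg]; exact rAnn_neg (hf j)

lemma mem_extSet_of_coeff {C : Set B} {f : Polynomial B} (h : ∀ j, f.coeff j ∈ C) :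
    f ∈ extSet B C := by
  rw [f.as_sum_support_C_mul_X_pow]
  exact AddSubgroup.sum_mem _ fun i _ =>
    AddSubgroup.subset_closure ⟨f.coeff i, h i, Polynomial.X ^ i, rfl⟩

lemma coeff_of_mem_extSet {U : Set M} {f : Polynomial B} (hf : f ∈ extSet B (rAnn B U)) :
    ∀ j, f.coeff j ∈ rAnn B U := by
  have : extSet B (rAnn B U) ⊆ ((coeffAnn (B := B) U : AddSubgroup (Polynomial B)) : Set (Polynomial B)) := by
    apply AddSubgroup.closure_le (coeffAnn (B := B) U) |>.mpr
    rintro g ⟨c, hc, f, rfl⟩ j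
    rw [Polynomial.coeff_C_mul]
    exact rAnn_mul hc _
  exact this hf

lemma mem_rAnn_iff_C_mem {U : Set M} {c : B} :
    c ∈ rAnn B U ↔ Polynomial.C c ∈ extSet B (rAnn B U) := by
  constructor
  · intro h
    exact AddSubgroup.subset_closure ⟨c, h, 1, (mul_one _).symm⟩
  · intro h
    have := coeff_of_mem_extSet h 0
    rwa [Polynomial.coeff_C_zero] at this

/-- The annihilator of `V ⊆ M[x]` in `B[x]` as an additive subgroup. -/
def rAnnPolySub (B : Type*) [Ring B] (M : Type*) [AddCommGroup M] [Module Bᵐᵒᵖ M]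
    (V : Set (ℕ →₀ M)) : AddSubgroup (Polynomial B) :=
  letI := polyModOp B M
  { carrier := rAnn (Polynomial B) V
    zero_mem' := rAnn_zero V
    add_mem' := fun ha hb => rAnn_add ha hb
    neg_mem' := fun ha => rAnn_neg ha }

/-- The master lemma: `(ann_B coeffs(V)) · B[x] = ann_{B[x]} V` for Armendariz `M`. -/
lemma key (hArm : RArmendariz B M) (V : Set (ℕ →₀ M)) :
    extSet B (rAnn B {m : M | ∃ p ∈ V, ∃ i, p i = m}) =
      (letI := polyModOp B M; rAnn (Polynomial B) V) := by
  letI := polyModOp B M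
  apply Set.Subset.antisymm
  · have : extSet B (rAnn B {m : M | ∃ p ∈ V, ∃ i, p i = m}) ⊆
        (rAnnPolySub B M V : Set (Polynomial B)) := by
      apply AddSubgroup.closure_le (rAnnPolySub B M V) |>.mpr
      rintro g ⟨c, hc, f, rfl⟩ p hp
      rw [rsmul_op, rsmul_C_mul]
      have hz : op c • p = 0 := by
        ext i
        rw [Finsupp.smul_apply, Finsupp.coe_zero, Pi.zero_apply]
        exact hc (p i) ⟨p, hp, i, rfl⟩
      rw [hz, rsmul_zero_left]
    exact this
  · intro f hf
    apply mem_extSet_of_coeff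
    rintro j m ⟨p, hp, i, rfl⟩
    exact hArm p f (hf p hp) i j

lemma rAnn_singles (U : Set M) :
    rAnn B {m : M | ∃ p ∈ {q : ℕ →₀ M | ∃ u ∈ U, q = Finsupp.single 0 u}, ∃ i, p i = m} =
      rAnn B U := by
  ext r
  constructor
  · intro h u hu
    exact h u ⟨Finsupp.single 0 u, ⟨u, hu, rfl⟩, 0, Finsupp.single_eq_same⟩
  · rintro h m ⟨p, ⟨u, hu, rfl⟩, i, rfl⟩
    rcases eq_or_ne i 0 with hi | hi
    · subst hi; rw [Finsupp.single_eq_same]; exact h u hu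
    · rw [Finsupp.single_eq_of_ne' (Ne.symm hi), smul_zero]

end Aux
/-- If `M` is an Armendariz right `B`-module, then the map `C ↦ C · B[x]` from annihilators
of subsets of `M` to annihilators of subsets of `M[x]` is bijective. -/
theorem stmt11 {B : Type*} [Ring B] {M : Type*} [AddCommGroup M] [Module Bᵐᵒᵖ M]
    (hArm : RArmendariz B M) :
    letI := polyModOp B M
    ∃ ψ : {C : Set B // ∃ U : Set M, C = rAnn B U} →
        {D : Set (Polynomial B) // ∃ V : Set (ℕ →₀ M), D = rAnn (Polynomial B) V},
      Function.Bijective ψ ∧ ∀ C, (ψ C : Set (Polynomial B)) = extSet B (C : Set B) := by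

  letI := polyModOp B M
  refine ⟨fun C => ⟨extSet B C.1, ?_⟩, ⟨?_, ?_⟩, fun C => rfl⟩
  · obtain ⟨U, hU⟩ := C.2
    refine ⟨{q : ℕ →₀ M | ∃ u ∈ U, q = Finsupp.single 0 u}, ?_⟩
    rw [hU, ← rAnn_singles U, key hArm]
  · rintro ⟨C₁, U₁, h₁⟩ ⟨C₂, U₂, h₂⟩ h
    have he : extSet B C₁ = extSet B C₂ := congrArg Subtype.val h
    apply Subtype.ext
    subst h₁ h₂
    ext c
    rw [mem_rAnn_iff_C_mem, mem_rAnn_iff_C_mem]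
    show Polynomial.C c ∈ extSet B (rAnn B U₁) ↔ Polynomial.C c ∈ extSet B (rAnn B U₂)
    rw [he]
  · rintro ⟨D, V, hD⟩
    refine ⟨⟨rAnn B {m : M | ∃ p ∈ V, ∃ i, p i = m}, ⟨_, rfl⟩⟩, Subtype.ext ?_⟩
    show extSet B (rAnn B {m : M | ∃ p ∈ V, ∃ i, p i = m}) = D
    rw [hD]
    exact key hArm V
end

section
/- Every Armendariz right B-module M with B embedded in M is abelian: for any m in M, r in B, and idempotent e in B, one has m*r*e = m*e*r. -/
open Polynomial MulOpposite

section Aux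
variable {B : Type*} [Ring B] {M : Type*} [AddCommGroup M] [Module Bᵐᵒᵖ M]

lemma rsmul_eq (p : ℕ →₀ M) (f : Polynomial B) :
    rsmul B M p f = Polynomial.eval₂ (Module.toAddMonoidEnd Bᵐᵒᵖ (ℕ →₀ M))
      (Finsupp.mapDomain.addMonoidHom Nat.succ : AddMonoid.End (ℕ →₀ M))
      ((Polynomial.opRingEquiv B) (op f)) p := rfl

lemma rsmul_formula (p : ℕ →₀ M) (a b : B) :
    rsmul B M p (C a + monomial 1 b) =
      op a • p + op b • p.mapDomain Nat.succ := by
  rw [rsmul_eq, op_add, map_add, Polynomial.opRingEquiv_op_C,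
    Polynomial.opRingEquiv_op_monomial]
  erw [eval₂_add, eval₂_C, eval₂_monomial]
  erw [pow_one]
  rfl


lemma op_smul_op_smul' (a c : B) (m : M) : op a • op c • m = op (c * a) • m := by
  rw [smul_smul, ← op_mul]

lemma key_s12 (hArm : RArmendariz B M) (m : M) (r e : B) (he : e * e = e) :
    op (e * r * (1 - e)) • m = 0 := by
  set b := e * r * (1 - e) with hb
  have h1e : (1 - e) * (1 - e) = 1 - e := by noncomm_ring; rw [he]; abel
  have hbe : b * (1 - e) = b := by rw [hb, mul_assoc, h1e]
  have heb : e * b = b := by rw [hb, ← mul_assoc, ← mul_assoc, he]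
  have hbb : b * b = 0 := by
    rw [hb]; rw [show e*r*(1-e)*(e*r*(1-e)) = e*r*((1-e)*e)*(r*(1-e)) by noncomm_ring,
      show (1-e)*e = 0 by noncomm_ring; rw [he]; abel]
    noncomm_ring
  set p : ℕ →₀ M := Finsupp.single 0 (op e • m) + Finsupp.single 1 (op b • m) with hp
  have hz : rsmul B M p (C (1 - e) + monomial 1 (-b)) = 0 := by
    rw [rsmul_formula, hp]
    rw [Finsupp.mapDomain_add, Finsupp.mapDomain_single, Finsupp.mapDomain_single]
    simp only [smul_add, Finsupp.smul_single]
    rw [op_smul_op_smul', op_smul_op_smul', op_smul_op_smul', op_smul_op_smul']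
    rw [show e * (1 - e) = 0 by noncomm_ring; rw [he]; abel, hbe,
      show e * -b = -b by rw [mul_neg, heb], show b * -b = 0 by rw [mul_neg, hbb, neg_zero]]
    simp only [op_zero, zero_smul, Finsupp.single_zero, zero_add, add_zero, op_neg, neg_smul,
      Nat.succ_eq_add_one, zero_add, Finsupp.single_neg]
    abel
  have := hArm p _ hz 0 1
  rw [coeff_add, coeff_C, if_neg one_ne_zero, coeff_monomial, if_pos rfl, zero_add, hp] at this
  simp only [Finsupp.add_apply, Finsupp.single_eq_same, Finsupp.single_eq_of_ne' (by norm_num : (1:ℕ) ≠ 0), add_zero] at this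
  rw [op_smul_op_smul', mul_neg, heb, op_neg, neg_smul, neg_eq_zero] at this
  exact this


end Aux

/-- Every Armendariz right `B`-module `M` with `B ⊆ M` is abelian: `mre = mer` for all
`m ∈ M`, `r ∈ B`, and idempotents `e` of `B`. -/

theorem stmt12 {B : Type*} [Ring B] {M : Type*} [AddCommGroup M] [Module Bᵐᵒᵖ M]
    (ι : B →ₗ[Bᵐᵒᵖ] M) (hι : Function.Injective ι)
    (hArm : RArmendariz B M) (m : M) (r e : B) (he : e * e = e) :
    op e • (op r • m) = op r • (op e • m) := by
  have h1e : (1 - e) * (1 - e) = 1 - e := by noncomm_ring; rw [he]; abel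
  have k1 := key_s12 hArm m r e he
  have k2 := key_s12 hArm m r (1 - e) h1e
  rw [show e * r * (1 - e) = e * r - e * r * e by noncomm_ring] at k1
  rw [show (1 - e) * r * (1 - (1 - e)) = r * e - e * r * e by noncomm_ring] at k2
  rw [op_sub, sub_smul, sub_eq_zero] at k1 k2
  rw [op_smul_op_smul', op_smul_op_smul', k2, k1]
end

section
/- Let M be a reduced right B-module. Then M is a p.p.-module if and only if M is a p.q.-Baer module. -/
open MulOpposite

/-- A right `S`-module `N` is a p.p.-module if the annihilator of each element is
generated by an idempotent. -/
def IsPPMod (S : Type*) [Ring S] (N : Type*) [AddCommGroup N] [Module Sᵐᵒᵖ N] : Prop :=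
  ∀ n : N, IsIdempotentGenerated S (rAnn S {n})

/-- A right `S`-module `N` is a p.q.-Baer module if the annihilator of each cyclic
submodule `nS` is generated by an idempotent. -/
def IsPQBaerMod (S : Type*) [Ring S] (N : Type*) [AddCommGroup N] [Module Sᵐᵒᵖ N] : Prop :=
  ∀ n : N, IsIdempotentGenerated S (rAnn S {x : N | ∃ b : S, x = op b • n})

lemma ann_eq_of_reduced {B : Type*} [Ring B] {M : Type*} [AddCommGroup M] [Module Bᵐᵒᵖ M]
    (hred : RModReduced B M) (m : M) :
    rAnn B ({m} : Set M) = rAnn B {x : M | ∃ b : B, x = op b • m} := by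
  ext a
  constructor
  · intro h x hx
    obtain ⟨b, rfl⟩ := hx
    have hm : op a • m = 0 := h m rfl
    exact hred m a hm (op a • op b • m)
      ⟨b * a, by rw [op_mul, mul_smul]⟩ ⟨op b • m, rfl⟩
  · intro h x hx
    rw [Set.mem_singleton_iff] at hx
    subst hx
    exact h x ⟨1, by simp⟩

/-- A reduced right `B`-module is a p.p.-module if and only if it is a p.q.-Baer module. -/
theorem stmt13 {B : Type*} [Ring B] {M : Type*} [AddCommGroup M] [Module Bᵐᵒᵖ M]
    (hred : RModReduced B M) : IsPPMod B M ↔ IsPQBaerMod B M := by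
  unfold IsPPMod IsPQBaerMod
  apply forall_congr'
  intro n
  rw [ann_eq_of_reduced hred n]
end

section
/- Let B be a ring and M a quasi-Armendariz right B-module. Then M satisfies the ascending chain condition on annihilators of submodules if and only if the polynomial module M[x] over B[x] satisfies the ascending chain condition on annihilators of its submodules. -/
open Polynomial MulOpposite

/-- A right `B`-module `M` is quasi-Armendariz if `m(x) B[x] f(x) = 0` implies
`m_i B b_j = 0` for all coefficients `m_i` of `m(x)` and `b_j` of `f(x)`. -/
def RQuasiArmendariz (B : Type*) [Ring B] (M : Type*) [AddCommGroup M]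
    [Module Bᵐᵒᵖ M] : Prop :=
  ∀ (p : ℕ →₀ M) (f : Polynomial B),
    (∀ h : Polynomial B, rsmul B M p (h * f) = 0) →
      ∀ (i j : ℕ) (r : B), op (f.coeff j) • (op r • p i) = 0

/-- A right `S`-module `N` satisfies the ascending chain condition on annihilators of
submodules. -/
def AccAnnSub (S : Type*) [Ring S] (N : Type*) [AddCommGroup N] [Module Sᵐᵒᵖ N] : Prop :=
  ∀ c : ℕ → Set S, (∀ n, ∃ X : Submodule Sᵐᵒᵖ N, c n = rAnn S (X : Set N)) →
    (∀ n, c n ⊆ c (n + 1)) → ∃ n, ∀ k, n ≤ k → c k = c n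

section
variable {B : Type*} [Ring B] {M : Type*} [AddCommGroup M] [Module Bᵐᵒᵖ M]

lemma rsmul_eval (p : ℕ →₀ M) (f : Polynomial B) :
    rsmul B M p f = Polynomial.eval₂ (Module.toAddMonoidEnd Bᵐᵒᵖ (ℕ →₀ M))
      (Finsupp.mapDomain.addMonoidHom Nat.succ : AddMonoid.End (ℕ →₀ M))
      (Polynomial.opRingEquiv B (op f)) p := rfl

lemma iterEnd (j : ℕ) (p : ℕ →₀ M) :
    (Finsupp.mapDomain.addMonoidHom Nat.succ : AddMonoid.End (ℕ →₀ M))^[j] p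
      = Finsupp.mapDomain (Nat.succ^[j]) p := by
  induction j with
  | zero => simp [Finsupp.mapDomain_id]
  | succ n ih =>
    rw [Function.iterate_succ_apply', ih, Finsupp.mapDomain.addMonoidHom_apply,
      ← Finsupp.mapDomain_comp, ← Function.iterate_succ']

lemma rsmul_monomial (p : ℕ →₀ M) (j : ℕ) (b : B) :
    rsmul B M p (monomial j b) = Finsupp.mapDomain (Nat.succ^[j]) (op b • p) := by
  rw [rsmul_eval, opRingEquiv_op_monomial]
  erw [eval₂_monomial]
  have h1 : ∀ (s t : AddMonoid.End (ℕ →₀ M)) (q : ℕ →₀ M), (s * t) q = s (t q) := fun _ _ _ => rfl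
  rw [h1]
  erw [AddMonoid.End.coe_pow, iterEnd]
  exact (Finsupp.mapDomain_smul (op b) p).symm

lemma rsmul_add (p : ℕ →₀ M) (f g : Polynomial B) :
    rsmul B M p (f + g) = rsmul B M p f + rsmul B M p g := by
  simp only [rsmul_eval, op_add, map_add]
  erw [eval₂_add]
  rfl

lemma rsmul_sum (p : ℕ →₀ M) (f : Polynomial B) :
    rsmul B M p f = f.sum fun j b => Finsupp.mapDomain (Nat.succ^[j]) (op b • p) := by
  induction f using Polynomial.induction_on' with
  | add f g hf hg =>
    rw [rsmul_add, hf, hg, Polynomial.sum_add_index]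
    · intro i; simp
    · intro a b₁ b₂; rw [op_add, add_smul, Finsupp.mapDomain_add]
  | monomial n a =>
    rw [rsmul_monomial, Polynomial.sum_monomial_index]
    simp

lemma rsmul_zero_of (p : ℕ →₀ M) (f : Polynomial B)
    (h : ∀ j i, op (f.coeff j) • p i = 0) : rsmul B M p f = 0 := by
  rw [rsmul_sum, Polynomial.sum_def]
  refine Finset.sum_eq_zero fun j _ => ?_
  have : op (f.coeff j) • p = 0 := by
    ext i; rw [Finsupp.smul_apply, h j i]; rfl
  rw [this, Finsupp.mapDomain_zero]

lemma rsmul_single_apply (m : M) (f : Polynomial B) (k : ℕ) :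
    (rsmul B M (Finsupp.single 0 m) f) k = op (f.coeff k) • m := by
  rw [rsmul_sum, Polynomial.sum_def]
  have h1 : ∀ (j : ℕ) (b : B), Finsupp.mapDomain (Nat.succ^[j]) (op b • Finsupp.single (0:ℕ) m)
      = Finsupp.single j (op b • m) := by
    intro j b
    rw [Finsupp.smul_single, Finsupp.mapDomain_single, Nat.succ_iterate, Nat.zero_add]
  simp only [h1]
  rw [Finsupp.finset_sum_apply]
  simp only [Finsupp.single_apply]
  rw [Finset.sum_ite_eq' f.support k (fun j => op (f.coeff j) • m)]
  by_cases hk : k ∈ f.support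
  · rw [if_pos hk]
  · rw [if_neg hk, Polynomial.notMem_support_iff.mp hk, op_zero, zero_smul]

lemma rsmul_mem (X : Submodule Bᵐᵒᵖ M) (u : ℕ →₀ M) (hu : ∀ i, u i ∈ X)
    (f : Polynomial B) : ∀ k, (rsmul B M u f) k ∈ X := by
  intro k
  rw [rsmul_sum, Polynomial.sum_def, Finsupp.finset_sum_apply]
  refine Submodule.sum_mem X fun j _ => ?_
  by_cases h : ∃ i, Nat.succ^[j] i = k
  · obtain ⟨i, hi⟩ := h
    rw [← hi, Finsupp.mapDomain_apply (Nat.succ_injective.iterate j), Finsupp.smul_apply]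
    exact X.smul_mem _ (hu i)
  · rw [Finsupp.mapDomain_notin_range]
    · exact X.zero_mem
    · rintro ⟨i, hi⟩; exact h ⟨i, hi⟩

end

/-- If `M` is a quasi-Armendariz right `B`-module, then `M` satisfies the ascending chain
condition on annihilators of submodules if and only if `M[x]` does so over `B[x]`. -/
theorem stmt17 {B : Type*} [Ring B] {M : Type*} [AddCommGroup M] [Module Bᵐᵒᵖ M]
    (hqArm : RQuasiArmendariz B M) :
    letI := polyModOp B M
    (AccAnnSub B M ↔ AccAnnSub (Polynomial B) (ℕ →₀ M)) := by
  letI := polyModOp B M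
  show AccAnnSub B M ↔ AccAnnSub (Polynomial B) (ℕ →₀ M)
  have hrs : ∀ (u : ℕ →₀ M) (f : Polynomial B), op f • u = rsmul B M u f := fun _ _ => rfl
  -- the submodule of polynomials with all coefficients in X
  let W : Submodule Bᵐᵒᵖ M → Submodule (Polynomial B)ᵐᵒᵖ (ℕ →₀ M) := fun X =>
    { carrier := {u | ∀ i, u i ∈ X}
      add_mem' := fun ha hb i => by
        rw [Finsupp.add_apply]; exact X.add_mem (ha i) (hb i)
      zero_mem' := fun i => by rw [Finsupp.zero_apply]; exact X.zero_mem
      smul_mem' := fun f u hu => by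
        have : f • u = rsmul B M u f.unop := by rw [← hrs, op_unop]
        rw [this]
        exact rsmul_mem X u hu f.unop }
  have claim2 : ∀ X : Submodule Bᵐᵒᵖ M,
      rAnn (Polynomial B) ((W X : Set (ℕ →₀ M))) = {f | ∀ j, f.coeff j ∈ rAnn B (X : Set M)} := by
    intro X
    ext f
    constructor
    · intro hf j m hm
      have h1 : Finsupp.single 0 m ∈ W X := by
        intro i
        rw [Finsupp.single_apply]
        split
        · exact hm
        · exact X.zero_mem
      have h2 := hf _ h1
      rw [hrs] at h2
      have h3 := congrArg (fun q : ℕ →₀ M => q j) h2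
      simpa [rsmul_single_apply] using h3
    · intro hf u hu
      rw [Set.mem_setOf_eq] at hf
      rw [hrs]
      exact rsmul_zero_of u f fun j i => hf j _ (hu i)
  have claim1 : ∀ U : Submodule (Polynomial B)ᵐᵒᵖ (ℕ →₀ M),
      rAnn (Polynomial B) (U : Set (ℕ →₀ M)) = {f | ∀ j, f.coeff j ∈
        rAnn B ((Submodule.span Bᵐᵒᵖ {m | ∃ u ∈ U, ∃ i, u i = m} : Submodule Bᵐᵒᵖ M) : Set M)} := by
    intro U
    ext f
    constructor
    · intro hf j
      let T : Submodule Bᵐᵒᵖ M :=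
        { carrier := {x | ∀ r : B, op (f.coeff j) • (op r • x) = 0}
          add_mem' := fun {a b} ha hb r => by rw [smul_add, smul_add, ha r, hb r, add_zero]
          zero_mem' := fun r => by rw [smul_zero, smul_zero]
          smul_mem' := fun c x hx r => by
            have h5 : op r • c • x = op (c.unop * r) • x := by
              rw [← mul_smul]; rfl
            rw [h5]
            exact hx (c.unop * r)  }
      have hgen : {m | ∃ u ∈ U, ∃ i, u i = m} ⊆ (T : Set M) := by
        rintro m ⟨u, hu, i, rfl⟩
        intro r
        refine hqArm u f (fun h => ?_) i j r
        rw [← hrs]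
        rw [show op (h * f) = op f * op h from op_mul h f, mul_smul]
        exact hf _ (U.smul_mem (op h) hu)
      have hspan := Submodule.span_le.mpr hgen
      intro y hy
      have := hspan hy 1
      rwa [op_one, one_smul] at this
    · intro hf u hu
      rw [Set.mem_setOf_eq] at hf
      rw [hrs]
      exact rsmul_zero_of u f fun j i => hf j _ (Submodule.subset_span ⟨u, hu, i, rfl⟩)
  constructor
  · intro hM c hc hmono
    choose U hU using hc
    set Y : ℕ → Submodule Bᵐᵒᵖ M :=
      fun n => Submodule.span Bᵐᵒᵖ {m | ∃ u ∈ U n, ∃ i, u i = m} with hY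
    set d : ℕ → Set B := fun n => rAnn B ((Y n : Set M)) with hd
    have hcd : ∀ n, c n = {f : Polynomial B | ∀ j, f.coeff j ∈ d n} := fun n => by
      rw [hU n, claim1]
    have hd0 : ∀ (n : ℕ) (r : B), r ∈ d n ↔ Polynomial.C r ∈ c n := by
      intro n r
      rw [hcd n]
      constructor
      · intro hr j
        rw [Polynomial.coeff_C]
        split
        · exact hr
        · intro m hm; rw [op_zero, zero_smul]
      · intro h
        have := h 0
        rwa [Polynomial.coeff_C_zero] at this
    have hdmono : ∀ n, d n ⊆ d (n + 1) := fun n r hr =>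
      (hd0 (n + 1) r).mpr (hmono n ((hd0 n r).mp hr))
    obtain ⟨n₀, hn₀⟩ := hM d (fun n => ⟨Y n, rfl⟩) hdmono
    exact ⟨n₀, fun k hk => by rw [hcd k, hcd n₀, hn₀ k hk]⟩
  · intro hP c hc hmono
    choose X hX using hc
    set d : ℕ → Set (Polynomial B) := fun n => rAnn (Polynomial B) ((W (X n) : Set (ℕ →₀ M))) with hd
    have hcd : ∀ n, d n = {f : Polynomial B | ∀ j, f.coeff j ∈ c n} := fun n => by
      rw [hd]
      simp only [claim2, ← hX n]
    have hd0 : ∀ (n : ℕ) (r : B), r ∈ c n ↔ Polynomial.C r ∈ d n := by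
      intro n r
      rw [hcd n]
      constructor
      · intro hr j
        rw [Polynomial.coeff_C]
        split
        · exact hr
        · rw [hX n]; intro m hm; rw [op_zero, zero_smul]
      · intro h
        have := h 0
        rwa [Polynomial.coeff_C_zero] at this
    have hdmono : ∀ n, d n ⊆ d (n + 1) := by
      intro n f hf
      rw [hcd n] at hf
      rw [hcd (n + 1)]
      exact fun j => hmono n (hf j)
    obtain ⟨n₀, hn₀⟩ := hP d (fun n => ⟨W (X n), rfl⟩) hdmono
    refine ⟨n₀, fun k hk => Set.ext fun r => ?_⟩
    constructor
    · intro hr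
      exact (hd0 n₀ r).mpr ((hn₀ k hk) ▸ (hd0 k r).mp hr)
    · intro hr
      exact (hd0 k r).mpr ((hn₀ k hk).symm ▸ (hd0 n₀ r).mp hr)
end
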